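/- Let X ∈ F_q^{n×m} be a matrix-valued random variable uniformly distributed on a coset x₀ + C where C is the row space interpretation of an [n, n−k] linear MRD code over F_{q^m} with m ≥ n. Then for every full-rank B ∈ F_q^{μ×n} with μ ≤ n−k, the random variable W = BX is uniformly distributed on F_q^{μ×m}. -/

import Mathlib

/- If `X` is uniformly distributed on a coset `x₀ + C` of an `[n, n-k]` linear MRD
code over `F_{q^m}` (`m ≥ n`, every nonzero codeword has rank ≥ k+1), then for
every full-rank `B ∈ F_q^{μ×n}` with `μ ≤ n - k`, the variable `W = BX` is
uniformly distributed. -/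


open Module

lemma exists_li_extend {K V : Type*} [Field K] [AddCommGroup V] [Module K V]
    {j l : ℕ} (hjl : j ≤ l) (hl : l ≤ Module.finrank K V)
    (v : Fin j → V) (hv : LinearIndependent K v) :
    ∃ w : Fin l → V, LinearIndependent K w ∧
      ∀ i : Fin j, w ⟨i, i.2.trans_le hjl⟩ = v i := by
  induction l, hjl using Nat.le_induction with
  | base => exact ⟨v, hv, fun i => by simp⟩
  | succ l hjl ih =>
    obtain ⟨w, hw, hwv⟩ := ih ((Nat.le_succ l).trans hl)
    obtain ⟨x, hx⟩ := exists_linearIndependent_snoc_of_lt_finrank hw (Nat.lt_of_succ_le hl)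
    refine ⟨Fin.snoc w x, hx, fun i => ?_⟩
    have h1 : (⟨i, i.2.trans_le (hjl.trans (Nat.le_succ l))⟩ : Fin (l+1))
        = Fin.castSucc ⟨i, i.2.trans_le hjl⟩ := rfl
    rw [h1, Fin.snoc_castSucc, hwv]

lemma surj_on_code {K L : Type*} [Field K] [Field L] [Algebra K L] {n k μ : ℕ}
    (hkn : k ≤ n)
    (C : Submodule L (Fin n → L)) (hCdim : Module.finrank L C = n - k)
    (hMRD : ∀ c ∈ C, c ≠ 0 →
      k + 1 ≤ Module.finrank K (Submodule.span K (Set.range c)))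
    (B : Matrix (Fin μ) (Fin n) K) (hB : B.rank = μ) (hμ : μ ≤ n - k) :
    ∀ y : Fin μ → L, ∃ c ∈ C, (B.map (algebraMap K L)).mulVec c = y := by
  -- rows of B are linearly independent
  have hrows : LinearIndependent K B.row := by
    rw [linearIndependent_iff_card_eq_finrank_span, Fintype.card_fin, Set.finrank,
      ← Matrix.rank_eq_finrank_span_row, hB]
  have hnk : n - k ≤ finrank K (Fin n → K) := by
    rw [Module.finrank_fin_fun]; omega
  obtain ⟨w, hw, hwB⟩ := exists_li_extend hμ hnk _ hrows
  set M : Matrix (Fin (n - k)) (Fin n) K := Matrix.of w with hM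
  set Mₗ : Matrix (Fin (n - k)) (Fin n) L := M.map (algebraMap K L) with hMₗ
  -- injectivity on C
  have hinj0 : ∀ c ∈ C, Mₗ.mulVec c = 0 → c = 0 := by
    intro c hc h0
    by_contra hcne
    set φ : (Fin n → K) →ₗ[K] L := Fintype.linearCombination K c with hφ
    have hφw : ∀ i, φ (w i) = 0 := by
      intro i
      have := congrFun h0 i
      simp only [Matrix.mulVec, dotProduct, Pi.zero_apply] at this
      rw [hφ, Fintype.linearCombination_apply]
      rw [← this]
      refine Finset.sum_congr rfl fun j _ => ?_
      rw [Algebra.smul_def]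
      rfl
    have hspan : Submodule.span K (Set.range w) ≤ LinearMap.ker φ := by
      rw [Submodule.span_le]
      rintro _ ⟨i, rfl⟩
      exact hφw i
    have hker : n - k ≤ finrank K (LinearMap.ker φ) := by
      have h1 : finrank K (Submodule.span K (Set.range w)) = n - k := by
        rw [← Set.finrank, ← linearIndependent_iff_card_eq_finrank_span.mp hw, Fintype.card_fin]
      calc n - k = _ := h1.symm
        _ ≤ _ := Submodule.finrank_mono hspan
    have hrn : finrank K (LinearMap.range φ) + finrank K (LinearMap.ker φ) = n := by
      rw [LinearMap.finrank_range_add_finrank_ker, Module.finrank_fin_fun]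
    have hrange : LinearMap.range φ = Submodule.span K (Set.range c) :=
      Fintype.range_linearCombination K c
    have := hMRD c hc hcne
    rw [← hrange] at this
    omega
  -- surjectivity of Mₗ on C
  have hgC : Function.Injective ((Mₗ.mulVecLin).domRestrict C) := by
    rw [← LinearMap.ker_eq_bot, LinearMap.ker_eq_bot']
    rintro ⟨c, hc⟩ h0
    exact Subtype.ext (hinj0 c hc (by simpa using h0))
  have htop : LinearMap.range ((Mₗ.mulVecLin).domRestrict C) = ⊤ := by
    apply Submodule.eq_top_of_finrank_eq
    rw [LinearMap.finrank_range_of_inj hgC, hCdim, Module.finrank_fin_fun]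
  have hsurj : ∀ z : Fin (n - k) → L, ∃ c ∈ C, Mₗ.mulVec c = z := by
    intro z
    obtain ⟨⟨c, hc⟩, hcz⟩ := LinearMap.range_eq_top.mp htop z
    exact ⟨c, hc, hcz⟩
  intro y
  obtain ⟨c, hc, hcz⟩ := hsurj (fun t => if h : (t : ℕ) < μ then y ⟨t, h⟩ else 0)
  refine ⟨c, hc, funext fun i => ?_⟩
  have hrow : (B.map (algebraMap K L)) i = Mₗ ⟨i, i.2.trans_le hμ⟩ := by
    funext j
    simp only [Matrix.map_apply, hMₗ, hM, Matrix.of_apply]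
    rw [hwB i]; rfl
  have h1 : (B.map (algebraMap K L)).mulVec c i = Mₗ.mulVec c ⟨i, i.2.trans_le hμ⟩ := by
    simp only [Matrix.mulVec, hrow]
  rw [h1, hcz]
  simp

open scoped Classical in
theorem coset_coding_uniform_output {K L : Type*} [Field K] [Field L]
    [Fintype K] [Fintype L] [Algebra K L] {n m k μ : ℕ}
    (hm : Module.finrank K L = m) (hn : n ≤ m) (hkn : k ≤ n)
    (C : Submodule L (Fin n → L)) (hCdim : Module.finrank L C = n - k)
    (hMRD : ∀ c ∈ C, c ≠ 0 →
      k + 1 ≤ Module.finrank K (Submodule.span K (Set.range c)))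
    (x₀ : Fin n → L)
    (B : Matrix (Fin μ) (Fin n) K) (hB : B.rank = μ) (hμ : μ ≤ n - k)
    (S : Finset (Fin n → L)) (hS : ∀ x, x ∈ S ↔ x - x₀ ∈ C) (hSne : S.Nonempty) :
    PMF.map (fun x => (B.map (algebraMap K L)).mulVec x)
        (PMF.uniformOfFinset S hSne)
      = PMF.uniformOfFintype (Fin μ → L) := by
  have key := surj_on_code (K := K) (L := L) hkn C hCdim hMRD B hB hμ
  set f : (Fin n → L) → (Fin μ → L) := fun x => (B.map (algebraMap K L)).mulVec x with hf
  have hfadd : ∀ x c, f (x + c) = f x + f c := fun x c => Matrix.mulVec_add _ x c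
  set F : (Fin μ → L) → Finset (Fin n → L) := fun y => S.filter (fun x => f x = y) with hF
  -- every fiber is nonempty
  have hFne : ∀ y, (F y).Nonempty := by
    intro y
    obtain ⟨s, hs⟩ := hSne
    obtain ⟨c, hc, hfc⟩ := key (y - f s)
    have hfc' : f c = y - f s := hfc
    refine ⟨s + c, Finset.mem_filter.mpr ⟨?_, ?_⟩⟩
    · rw [hS]; have h1 := (hS s).mp hs
      have : s + c - x₀ = (s - x₀) + c := by abel
      rw [this]; exact C.add_mem h1 hc
    · rw [hfadd, hfc']; abel
  -- all fibers have the same cardinality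
  have hFcard : ∀ y₁ y₂, (F y₁).card = (F y₂).card := by
    intro y₁ y₂
    obtain ⟨c, hc, hfc⟩ := key (y₂ - y₁)
    have hfc' : f c = y₂ - y₁ := hfc
    refine Finset.card_bij' (fun x _ => x + c) (fun x _ => x - c) ?_ ?_ ?_ ?_
    · intro x hx
      obtain ⟨hxS, hxf⟩ := Finset.mem_filter.mp hx
      refine Finset.mem_filter.mpr ⟨?_, ?_⟩
      · rw [hS]; have : x + c - x₀ = (x - x₀) + c := by abel
        rw [this]; exact C.add_mem ((hS x).mp hxS) hc
      · rw [hfadd, hxf, hfc']; abel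
    · intro x hx
      obtain ⟨hxS, hxf⟩ := Finset.mem_filter.mp hx
      have hmc : f (x - c) = f x - f c := by
        have : x - c = x + (-c) := by abel
        rw [this, hfadd]
        have : f (-c) = -f c := by
          have := hfadd c (-c)
          simp only [add_neg_cancel] at this
          have h0 : f 0 = 0 := Matrix.mulVec_zero _
          rw [h0] at this
          linear_combination (norm := abel) -this
        rw [this]; abel
      refine Finset.mem_filter.mpr ⟨?_, ?_⟩
      · rw [hS]; have : x - c - x₀ = (x - x₀) + (-c) := by abel
        rw [this]; exact C.add_mem ((hS x).mp hxS) (C.neg_mem hc)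
      · rw [hmc, hxf, hfc']; abel
    · intro x _; simp
    · intro x _; simp
  -- total count
  have htot : S.card = ∑ y : Fin μ → L, (F y).card :=
    Finset.card_eq_sum_card_fiberwise (fun x _ => Finset.mem_univ (f x))
  have hcount : ∀ y, S.card = Fintype.card (Fin μ → L) * (F y).card := by
    intro y
    rw [htot]
    rw [Finset.sum_congr rfl (fun y' _ => hFcard y' y)]
    simp [Finset.sum_const, mul_comm]
  -- PMF computation
  apply PMF.ext
  intro y
  rw [PMF.map_apply, PMF.uniformOfFintype_apply]
  rw [tsum_fintype]
  refine (Finset.sum_congr rfl (fun x _ => ?_) :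
      _ = ∑ x : Fin n → L, if x ∈ F y then ((S.card : ENNReal))⁻¹ else 0).trans ?_
  · rw [PMF.uniformOfFinset_apply]
    by_cases h2 : y = f x
    · rw [if_pos h2]
      by_cases h1 : x ∈ S
      · rw [if_pos h1, if_pos (Finset.mem_filter.mpr ⟨h1, h2.symm⟩)]
      · rw [if_neg h1, if_neg (fun hxF => h1 (Finset.mem_filter.mp hxF).1)]
    · rw [if_neg h2, if_neg (fun hxF => h2 ((Finset.mem_filter.mp hxF).2).symm)]
  rw [Finset.sum_ite_mem, Finset.univ_inter, Finset.sum_const, nsmul_eq_mul]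
  -- now: (F y).card * (S.card)⁻¹ = (card)⁻¹
  have hFc0 : ((F y).card : ENNReal) ≠ 0 := by
    simpa using (hFne y).card_pos.ne'
  have hN0 : ((Fintype.card (Fin μ → L) : ENNReal)) ≠ 0 := by
    simpa using Fintype.card_pos.ne'
  rw [hcount y]
  push_cast
  rw [ENNReal.mul_inv (Or.inl hN0) (Or.inl (ENNReal.natCast_ne_top _))]
  rw [mul_comm ((Fintype.card (Fin μ → L) : ENNReal))⁻¹ _, ← mul_assoc,
    ENNReal.mul_inv_cancel hFc0 (ENNReal.natCast_ne_top _), one_mul]
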